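/- Every Φ-extreme point of K is Φ-extreme in the sense of Ky Fan; that is, if x ∈ K is such that δ^Φ(x) is an extreme point of K(Φ), then whenever x ∈ [y,z]_Φ for y, z ∈ K, it follows that x = y = z. -/

import Mathlib

open MeasureTheory Set

section Defs

variable {K : Type*} [TopologicalSpace K] [CompactSpace K]

/-- The canonical injection `δ^Φ : K → Φ*`, `δ^Φ(x)(φ) = φ(x)`. -/
noncomputable def deltaPhi (Φ : Submodule ℝ C(K, ℝ)) (x : K) : WeakDual ℝ ↥Φ :=
  (ContinuousMap.evalCLM ℝ x).comp Φ.subtypeL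

/-- The set `K(Φ) = {Q ∈ Φ* : ‖Q‖ = Q(𝟏) = 1}`. -/
noncomputable def KPhi (Φ : Submodule ℝ C(K, ℝ))
    (h1 : ContinuousMap.const K (1 : ℝ) ∈ Φ) : Set (WeakDual ℝ ↥Φ) :=
  {Q | @norm _ (ContinuousLinearMap.hasOpNorm (𝕜 := ℝ) (𝕜₂ := ℝ) (E := ↥Φ) (F := ℝ))
      (WeakDual.toStrongDual Q) = 1 ∧ Q ⟨ContinuousMap.const K (1 : ℝ), h1⟩ = 1}

end Defs

/-- Every `Φ`-extreme point of `K` is `Φ`-extreme in the sense of Ky Fan: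
if `δ^Φ(x)` is an extreme point of `K(Φ)` and `x` belongs to the Ky Fan `Φ`-segment
`[y,z]_Φ`, then `x = y = z`. -/
theorem stmt11 {K : Type*} [TopologicalSpace K] [CompactSpace K] [T2Space K]
    (Φ : Submodule ℝ C(K, ℝ)) (hΦclosed : IsClosed (Φ : Set C(K, ℝ)))
    (hsep : ∀ x y : K, x ≠ y → ∃ φ ∈ Φ, φ x ≠ φ y)
    (hconst : ∀ c : ℝ, ContinuousMap.const K c ∈ Φ)
    (x : K) (hx : deltaPhi Φ x ∈ Set.extremePoints ℝ (KPhi Φ (hconst 1)))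
    (y z : K)
    (hseg : ∀ φ : C(K, ℝ), φ ∈ Φ → φ x ≤ min (φ y) (φ z) → φ x = φ y ∧ φ x = φ z) :
    x = y ∧ x = z := by
  classical
  have hne : Nonempty K := ⟨x⟩
  -- lower bound: φ x ≥ min (φ y) (φ z)
  have hmin : ∀ φ : C(K, ℝ), φ ∈ Φ → min (φ y) (φ z) ≤ φ x := by
    intro φ hφ
    by_contra h
    push_neg at h
    obtain ⟨h1, _⟩ := hseg φ hφ h.le
    have := min_le_left (φ y) (φ z)
    linarith
  -- upper bound: φ x ≤ max (φ y) (φ z)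
  have hmax : ∀ φ : C(K, ℝ), φ ∈ Φ → φ x ≤ max (φ y) (φ z) := by
    intro φ hφ
    have h := hmin (-φ) (neg_mem hφ)
    simp only [ContinuousMap.neg_apply] at h
    rcases min_le_iff.1 h with h' | h'
    · exact le_max_of_le_left (by linarith)
    · exact le_max_of_le_right (by linarith)
  -- the symmetric segment hypothesis
  have hseg' : ∀ φ : C(K, ℝ), φ ∈ Φ → φ x ≤ min (φ z) (φ y) → φ x = φ z ∧ φ x = φ y := by
    intro φ hφ h
    rw [min_comm] at h
    obtain ⟨a, b⟩ := hseg φ hφ h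
    exact ⟨b, a⟩
  -- key step: if φ x = φ y' for all φ, then x = y' and x = z'
  have key : ∀ y' z' : K,
      (∀ φ : C(K, ℝ), φ ∈ Φ → φ x ≤ min (φ y') (φ z') → φ x = φ y' ∧ φ x = φ z') →
      (∀ φ : C(K, ℝ), φ ∈ Φ → φ x = φ y') → x = y' ∧ x = z' := by
    intro y' z' hs hall
    have hxy : x = y' := by
      by_contra h
      obtain ⟨φ, hφ, hne'⟩ := hsep x y' h
      exact hne' (hall φ hφ)
    have hxz' : ∀ φ : C(K, ℝ), φ ∈ Φ → φ x = φ z' := by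
      intro φ hφ
      rcases le_total (φ x) (φ z') with h | h
      · exact (hs φ hφ (le_min (hall φ hφ).le h)).2
      · have h2 := hs (-φ) (neg_mem hφ) ?_
        · have := h2.2
          simp only [ContinuousMap.neg_apply, neg_inj] at this
          exact this
        · simp only [ContinuousMap.neg_apply]
          exact le_min (by rw [hall φ hφ]) (by linarith)
    have hxz : x = z' := by
      by_contra h
      obtain ⟨φ, hφ, hne'⟩ := hsep x z' h
      exact hne' (hxz' φ hφ)
    exact ⟨hxy, hxz⟩
  -- δ(w) ∈ K(Φ) for every w
  have hK : ∀ w : K, deltaPhi Φ w ∈ KPhi Φ (hconst 1) := by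
    intro w
    have hone : ‖(⟨ContinuousMap.const K (1 : ℝ), hconst 1⟩ : Φ)‖ = 1 := by
      show ‖ContinuousMap.const K (1 : ℝ)‖ = 1
      rw [ContinuousMap.norm_eq_iSup_norm]
      simp
    have happ : deltaPhi Φ w ⟨ContinuousMap.const K (1 : ℝ), hconst 1⟩ = 1 := rfl
    refine ⟨le_antisymm ?_ ?_, happ⟩
    · refine ContinuousLinearMap.opNorm_le_bound _ zero_le_one ?_
      rintro ⟨φ, hφ⟩
      rw [one_mul]
      exact φ.norm_coe_le_norm w
    · have := ContinuousLinearMap.le_opNorm (𝕜 := ℝ) (𝕜₂ := ℝ) (E := Φ) (F := ℝ) (WeakDual.toStrongDual (deltaPhi Φ w))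
        ⟨ContinuousMap.const K (1 : ℝ), hconst 1⟩
      erw [hone, mul_one] at this
      calc (1 : ℝ) = ‖(1 : ℝ)‖ := by norm_num
        _ ≤ _ := by rw [← happ]; exact this
  by_cases hyz : y = z
  · subst hyz
    refine key y y hseg ?_
    intro φ hφ
    have h1 := hmin φ hφ
    have h2 := hmax φ hφ
    simp only [min_self, max_self] at h1 h2
    linarith
  · -- main argument, for a separating ψ with ψ y < ψ z
    have main : ∀ ψ : C(K, ℝ), ψ ∈ Φ → ψ y < ψ z → x = y ∧ x = z := by
      intro ψ hψΦ hlt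
      set d : ℝ := ψ z - ψ y with hd_def
      have hd : 0 < d := by simp [hd_def]; linarith
      set t : ℝ := (ψ x - ψ y) / d with ht_def
      have hψxt : ψ x - ψ y = t * d := (div_mul_cancel₀ _ hd.ne').symm
      have ht0 : 0 ≤ t := by
        have := hmin ψ hψΦ
        rw [min_eq_left hlt.le] at this
        exact div_nonneg (by linarith) hd.le
      have ht1 : t ≤ 1 := by
        have := hmax ψ hψΦ
        rw [max_eq_right hlt.le] at this
        rw [ht_def]
        exact (div_le_one hd).2 (by linarith)
      -- the affine identity
      have haff : ∀ φ : C(K, ℝ), φ ∈ Φ → φ x = (1 - t) * φ y + t * φ z := by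
        intro φ hφ
        set c : ℝ := (φ z - φ y) / d with hc_def
        have hc : c * d = φ z - φ y := div_mul_cancel₀ _ hd.ne'
        have hφ0 : φ - c • ψ ∈ Φ := Φ.sub_mem hφ (Φ.smul_mem c hψΦ)
        have h0yz : (φ - c • ψ) y = (φ - c • ψ) z := by
          simp only [ContinuousMap.sub_apply, ContinuousMap.smul_apply, smul_eq_mul]
          have : c * d = φ z - φ y := hc
          rw [hd_def] at this
          linarith [this]
        have h1 := hmin (φ - c • ψ) hφ0
        have h2 := hmax (φ - c • ψ) hφ0
        rw [h0yz, min_self] at h1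
        rw [h0yz, max_self] at h2
        have heq : (φ - c • ψ) x = (φ - c • ψ) z := le_antisymm h2 h1
        simp only [ContinuousMap.sub_apply, ContinuousMap.smul_apply, smul_eq_mul] at heq h0yz
        calc φ x = φ y + c * (ψ x - ψ y) := by linarith
          _ = φ y + c * (t * d) := by rw [hψxt]
          _ = φ y + t * (c * d) := by ring
          _ = φ y + t * (φ z - φ y) := by rw [hc]
          _ = (1 - t) * φ y + t * φ z := by ring
      rcases eq_or_lt_of_le ht0 with h0 | h0
      · -- t = 0 : φ x = φ y for all φ
        refine key y z hseg ?_
        intro φ hφ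
        have := haff φ hφ
        rw [← h0] at this
        simpa using this
      rcases eq_or_lt_of_le ht1 with h1 | h1
      · -- t = 1 : φ x = φ z for all φ
        have h := key z y hseg' ?_
        · exact ⟨h.2, h.1⟩
        · intro φ hφ
          have := haff φ hφ
          rw [h1] at this
          simpa using this
      · -- 0 < t < 1 : use extremality
        have hsegmem : deltaPhi Φ x ∈
            openSegment ℝ (deltaPhi Φ y) (deltaPhi Φ z) := by
          refine ⟨1 - t, t, by linarith, h0, by ring, ?_⟩
          apply ContinuousLinearMap.ext
          rintro ⟨φ, hφ⟩
          have := haff φ hφ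
          show (1 - t) * φ y + t * φ z = φ x
          exact this.symm
        obtain ⟨hy', hz'⟩ := (mem_extremePoints.1 hx).2 _ (hK y) _ (hK z) hsegmem
        constructor
        · by_contra h
          obtain ⟨φ, hφ, hne'⟩ := hsep x y h
          exact hne' (DFunLike.congr_fun hy' ⟨φ, hφ⟩).symm
        · by_contra h
          obtain ⟨φ, hφ, hne'⟩ := hsep x z h
          exact hne' (DFunLike.congr_fun hz' ⟨φ, hφ⟩).symm
    obtain ⟨ψ, hψΦ, hψne⟩ := hsep y z hyz
    rcases hψne.lt_or_gt with hlt | hlt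
    · exact main ψ hψΦ hlt
    · refine main (-ψ) (neg_mem hψΦ) ?_
      simp only [ContinuousMap.neg_apply]
      linarith
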